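/- The function g : M(n,ℝ) → ℝ defined by g(A) = tr(√(AᵀA)) is (Fréchet) differentiable at A if and only if A is invertible. -/

import Mathlib

open Matrix

open Topology

attribute [local instance] Matrix.normedAddCommGroup Matrix.normedSpace

open scoped Classical in
/-- The unique positive semidefinite square root of a positive semidefinite real matrix
(junk value `0` on matrices that are not positive semidefinite). -/
noncomputable def psdSqrt {n : ℕ} (X : Matrix (Fin n) (Fin n) ℝ) : Matrix (Fin n) (Fin n) ℝ :=
  if h : X.PosSemidef then
    h.1.eigenvectorUnitary.1 * diagonal ((↑) ∘ (√·) ∘ h.1.eigenvalues) *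
      (star h.1.eigenvectorUnitary : Matrix (Fin n) (Fin n) ℝ)
  else 0

noncomputable def Matrix.PosSemidef.sqrt {n : ℕ} {X : Matrix (Fin n) (Fin n) ℝ}
    (h : X.PosSemidef) : Matrix (Fin n) (Fin n) ℝ :=
  h.1.eigenvectorUnitary.1 * diagonal ((↑) ∘ (√·) ∘ h.1.eigenvalues) *
    (star h.1.eigenvectorUnitary : Matrix (Fin n) (Fin n) ℝ)

open scoped MatrixOrder in
lemma Matrix.PosSemidef.sqrt_eq_cfc {n : ℕ} {X : Matrix (Fin n) (Fin n) ℝ}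
    (h : X.PosSemidef) : h.sqrt = CFC.sqrt X := by
  rw [CFC.sqrt_eq_cfc, cfc_nnreal_eq_real _ X, h.1.cfc_eq]
  simp only [IsHermitian.cfc, Matrix.PosSemidef.sqrt, Unitary.conjStarAlgAut_apply]
  congr 3
  ext i
  simp [Real.coe_sqrt, Real.coe_toNNReal', max_eq_left (h.eigenvalues_nonneg i)]

open scoped MatrixOrder in
lemma Matrix.PosSemidef.posSemidef_sqrt {n : ℕ} {X : Matrix (Fin n) (Fin n) ℝ}
    (h : X.PosSemidef) : h.sqrt.PosSemidef := by
  rw [h.sqrt_eq_cfc]; exact Matrix.nonneg_iff_posSemidef.mp (CFC.sqrt_nonneg X)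

open scoped MatrixOrder in
lemma Matrix.PosSemidef.sqrt_mul_self {n : ℕ} {X : Matrix (Fin n) (Fin n) ℝ}
    (h : X.PosSemidef) : h.sqrt * h.sqrt = X := by
  rw [h.sqrt_eq_cfc]; exact CFC.sqrt_mul_sqrt_self X h.nonneg

open scoped MatrixOrder in
lemma Matrix.PosSemidef.eq_sqrt_of_sq_eq {n : ℕ} {A : Matrix (Fin n) (Fin n) ℝ}
    (hA : A.PosSemidef) {B : Matrix (Fin n) (Fin n) ℝ} (hB : B.PosSemidef) (h : A ^ 2 = B) :
    A = hB.sqrt := by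
  rw [hB.sqrt_eq_cfc, eq_comm, CFC.sqrt_eq_iff B A hB.nonneg hA.nonneg, ← sq, h]


section Aux

variable {n : ℕ}

local notation "Mat" => Matrix (Fin n) (Fin n) ℝ

lemma isHermitian_of_symm {X : Mat} (h : Xᵀ = X) : X.IsHermitian := by
  rw [Matrix.IsHermitian, Matrix.conjTranspose_eq_transpose_of_trivial, h]

lemma symm_of_isHermitian {X : Mat} (h : X.IsHermitian) : Xᵀ = X := by
  rw [Matrix.IsHermitian, Matrix.conjTranspose_eq_transpose_of_trivial] at h
  exact h

lemma mul_vecMulVec (M : Mat) (a b : Fin n → ℝ) :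
    M * vecMulVec a b = vecMulVec (M *ᵥ a) b := by
  ext i j
  simp [Matrix.mul_apply, vecMulVec_apply, Matrix.mulVec, dotProduct,
    Finset.sum_mul, mul_assoc]

lemma vecMulVec_mul (a b : Fin n → ℝ) (M : Mat) :
    vecMulVec a b * M = vecMulVec a (b ᵥ* M) := by
  ext i j
  simp [Matrix.mul_apply, vecMulVec_apply, Matrix.vecMul, dotProduct,
    Finset.mul_sum, mul_assoc]

lemma vecMulVec_mul_vecMulVec (a b c d : Fin n → ℝ) :
    vecMulVec a b * vecMulVec c d = (b ⬝ᵥ c) • vecMulVec a d := by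
  ext i j
  simp [Matrix.mul_apply, vecMulVec_apply, dotProduct, Finset.sum_mul,
    Finset.mul_sum]
  congr 1; ext k; ring

lemma trace_vecMulVec (a b : Fin n → ℝ) : (vecMulVec a b).trace = a ⬝ᵥ b := by
  simp [Matrix.trace, Matrix.diag, vecMulVec_apply, dotProduct]

lemma vecMulVec_transpose (a b : Fin n → ℝ) : (vecMulVec a b)ᵀ = vecMulVec b a := by
  ext i j; simp [vecMulVec_apply, mul_comm]

lemma posSemidef_vecMulVec_self (v : Fin n → ℝ) : (vecMulVec v v).PosSemidef := by
  refine Matrix.PosSemidef.of_dotProduct_mulVec_nonneg ?_ ?_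
  · rw [Matrix.IsHermitian, Matrix.conjTranspose_eq_transpose_of_trivial,
      vecMulVec_transpose]
  · intro x
    have : vecMulVec v v *ᵥ x = (v ⬝ᵥ x) • v := by
      ext i
      simp [Matrix.mulVec, vecMulVec_apply, dotProduct, Finset.mul_sum, mul_assoc]
      rw [Finset.sum_mul]
      congr 1; ext k; ring
    rw [this]
    simp only [star_trivial, dotProduct_smul]
    have : x ⬝ᵥ v = v ⬝ᵥ x := dotProduct_comm x v
    rw [smul_eq_mul, this]
    exact mul_self_nonneg _

lemma sqrt_mulVec_eq_zero {X : Mat} (hX : X.PosSemidef) {v : Fin n → ℝ}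
    (hv : X *ᵥ v = 0) : hX.sqrt *ᵥ v = 0 := by
  set S := hX.sqrt with hS
  have hsymm : Sᵀ = S := symm_of_isHermitian hX.posSemidef_sqrt.isHermitian
  have h2 : S *ᵥ (S *ᵥ v) = 0 := by
    rw [Matrix.mulVec_mulVec, hX.sqrt_mul_self, hv]
  have hdot : (S *ᵥ v) ⬝ᵥ (S *ᵥ v) = 0 := by
    have : (S *ᵥ v) = v ᵥ* S := by
      conv_lhs => rw [← hsymm]
      rw [Matrix.mulVec_transpose]
    nth_rewrite 1 [this]
    rw [← dotProduct_mulVec, h2, dotProduct_zero]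
  exact dotProduct_self_eq_zero.mp hdot


lemma vecMulVec_zero_left (v : Fin n → ℝ) : vecMulVec (0 : Fin n → ℝ) v = 0 := by
  ext i j; simp [vecMulVec_apply]

lemma vecMulVec_zero_right (v : Fin n → ℝ) : vecMulVec v (0 : Fin n → ℝ) = 0 := by
  ext i j; simp [vecMulVec_apply]

lemma smulPosSemidef {M : Mat} (hM : M.PosSemidef) {c : ℝ} (hc : 0 ≤ c) :
    (c • M).PosSemidef := by
  refine Matrix.PosSemidef.of_dotProduct_mulVec_nonneg ?_ ?_
  · exact isHermitian_of_symm (by rw [Matrix.transpose_smul, symm_of_isHermitian hM.1])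
  · intro x
    rw [Matrix.smul_mulVec, dotProduct_smul, smul_eq_mul]
    exact mul_nonneg hc (by simpa using hM.dotProduct_mulVec_nonneg x)

lemma exists_unit_kernel {A : Mat} (hdet : A.det = 0) :
    ∃ v : Fin n → ℝ, v ⬝ᵥ v = 1 ∧ A *ᵥ v = 0 := by
  obtain ⟨v, hv0, hAv⟩ := (Matrix.exists_mulVec_eq_zero_iff).mpr hdet
  have hd0 : (0:ℝ) ≤ v ⬝ᵥ v := Finset.sum_nonneg fun i _ => mul_self_nonneg _
  have hdne : v ⬝ᵥ v ≠ 0 := fun h => hv0 (dotProduct_self_eq_zero.mp h)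
  have hd : 0 < v ⬝ᵥ v := lt_of_le_of_ne hd0 (Ne.symm hdne)
  refine ⟨(Real.sqrt (v ⬝ᵥ v))⁻¹ • v, ?_, ?_⟩
  · rw [smul_dotProduct, dotProduct_smul, smul_eq_mul, smul_eq_mul, ← mul_assoc,
      ← mul_inv, Real.mul_self_sqrt hd.le, inv_mul_cancel₀ hdne]
  · rw [Matrix.mulVec_smul, hAv, smul_zero]

end Aux

section Aux2

variable {n : ℕ}

local notation "Mat" => Matrix (Fin n) (Fin n) ℝ

lemma trace_psdSqrt_perturb {A : Mat} (hdet : A.det = 0) :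
    ∃ B : Mat, ∀ t : ℝ,
      (psdSqrt ((A + t • B)ᵀ * (A + t • B))).trace
        = (psdSqrt (Aᵀ * A)).trace + |t| := by
  obtain ⟨v, hv1, hAv⟩ := exists_unit_kernel hdet
  obtain ⟨w, hw1, hAtw⟩ := exists_unit_kernel (show Aᵀ.det = 0 by rwa [Matrix.det_transpose])
  refine ⟨vecMulVec w v, fun t => ?_⟩
  set P : Mat := vecMulVec v v with hP
  have hM₀ : (Aᵀ * A).PosSemidef := by
    have := Matrix.posSemidef_conjTranspose_mul_self A
    rwa [Matrix.conjTranspose_eq_transpose_of_trivial] at this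
  set S : Mat := hM₀.sqrt with hSdef
  have hSsymm : Sᵀ = S := symm_of_isHermitian hM₀.posSemidef_sqrt.isHermitian
  have h1 : Aᵀ * vecMulVec w v = 0 := by
    rw [_root_.mul_vecMulVec, hAtw, vecMulVec_zero_left]
  have h2 : vecMulVec v w * A = 0 := by
    rw [_root_.vecMulVec_mul, ← Matrix.mulVec_transpose, hAtw, vecMulVec_zero_right]
  have h3 : vecMulVec v w * vecMulVec w v = P := by
    rw [_root_.vecMulVec_mul_vecMulVec, hw1, one_smul]
  have hexp : (A + t • vecMulVec w v)ᵀ * (A + t • vecMulVec w v) = Aᵀ * A + t ^ 2 • P := by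
    rw [Matrix.transpose_add, Matrix.transpose_smul, vecMulVec_transpose]
    simp only [Matrix.add_mul, Matrix.mul_add, Matrix.smul_mul, Matrix.mul_smul,
      h1, h2, h3, smul_smul, smul_zero, add_zero, zero_add]
    rw [← sq]
  have hM₀v : (Aᵀ * A) *ᵥ v = 0 := by
    rw [← Matrix.mulVec_mulVec, hAv, Matrix.mulVec_zero]
  have hSv : S *ᵥ v = 0 := sqrt_mulVec_eq_zero hM₀ hM₀v
  have hSP : S * P = 0 := by rw [hP, _root_.mul_vecMulVec, hSv, vecMulVec_zero_left]
  have hPS : P * S = 0 := by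
    rw [hP, _root_.vecMulVec_mul]
    have hvS : v ᵥ* S = 0 := by
      conv_lhs => rw [← hSsymm]
      rw [Matrix.vecMul_transpose, hSv]
    rw [hvS, vecMulVec_zero_right]
  have hPP : P * P = P := by rw [hP, _root_.vecMulVec_mul_vecMulVec, hv1, one_smul]
  set C : Mat := S + |t| • P with hC
  have hPpsd : P.PosSemidef := posSemidef_vecMulVec_self v
  have hCpsd : C.PosSemidef := hM₀.posSemidef_sqrt.add (smulPosSemidef hPpsd (abs_nonneg t))
  have hpsd' : (Aᵀ * A + t ^ 2 • P).PosSemidef :=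
    hM₀.add (smulPosSemidef hPpsd (sq_nonneg t))
  have hCsq : C ^ 2 = Aᵀ * A + t ^ 2 • P := by
    rw [pow_two, hC]
    simp only [Matrix.add_mul, Matrix.mul_add, Matrix.smul_mul, Matrix.mul_smul,
      hSP, hPS, hPP, smul_smul, smul_zero, add_zero, zero_add, hM₀.sqrt_mul_self]
    rw [show S * S = Aᵀ * A from hM₀.sqrt_mul_self]
    rw [abs_mul_abs_self, ← sq]
  have hEq : psdSqrt ((A + t • vecMulVec w v)ᵀ * (A + t • vecMulVec w v)) = C := by
    rw [hexp, psdSqrt, dif_pos hpsd']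
    exact (hCpsd.eq_sqrt_of_sq_eq hpsd' hCsq).symm
  have hbase : psdSqrt (Aᵀ * A) = S := by rw [psdSqrt, dif_pos hM₀]; rfl
  rw [hEq, hbase, hC, Matrix.trace_add, Matrix.trace_smul, _root_.trace_vecMulVec, hv1,
    smul_eq_mul, mul_one]

lemma not_differentiable_of_det_eq_zero {A : Mat} (hdet : A.det = 0) :
    ¬ DifferentiableAt ℝ (fun X : Mat => (psdSqrt (Xᵀ * X)).trace) A := by
  intro hdiff
  obtain ⟨B, hB⟩ := trace_psdSqrt_perturb hdet
  have hc : DifferentiableAt ℝ (fun t : ℝ => A + t • B) 0 :=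
    (differentiableAt_const A).add (differentiableAt_id.smul_const B)
  have h0 : (fun t : ℝ => A + t • B) 0 = A := by simp
  have hcomp : DifferentiableAt ℝ
      (fun t : ℝ => (psdSqrt ((A + t • B)ᵀ * (A + t • B))).trace) 0 := by
    have hd : DifferentiableAt ℝ (fun X : Mat => (psdSqrt (Xᵀ * X)).trace)
        ((fun t : ℝ => A + t • B) 0) := by rw [h0]; exact hdiff
    have := hd.comp 0 hc; exact this
  rw [show (fun t : ℝ => (psdSqrt ((A + t • B)ᵀ * (A + t • B))).trace)
      = fun t : ℝ => (psdSqrt (Aᵀ * A)).trace + |t| from funext hB] at hcomp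
  have habs : DifferentiableAt ℝ (fun t : ℝ => |t|) 0 := by
    simpa using hcomp.sub (differentiableAt_const ((psdSqrt (Aᵀ * A)).trace))
  exact not_differentiableAt_abs_zero habs

end Aux2

section Aux3

variable (n : ℕ)

local notation "Mat" => Matrix (Fin n) (Fin n) ℝ

def symSubmodule : Submodule ℝ (Matrix (Fin n) (Fin n) ℝ) where
  carrier := {X | Xᵀ = X}
  add_mem' := by
    intro a b ha hb
    simp only [Set.mem_setOf_eq] at *
    rw [Matrix.transpose_add, ha, hb]
  zero_mem' := by simp only [Set.mem_setOf_eq, Matrix.transpose_zero]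
  smul_mem' := by
    intro c X hX
    simp only [Set.mem_setOf_eq] at *
    rw [Matrix.transpose_smul, hX]

variable {n}

lemma mem_symSubmodule {X : Mat} : X ∈ symSubmodule n ↔ Xᵀ = X := Iff.rfl

lemma isHermitian_of_symm' {X : Mat} (h : Xᵀ = X) : X.IsHermitian := by
  rw [Matrix.IsHermitian, Matrix.conjTranspose_eq_transpose_of_trivial, h]

noncomputable def symProj : Mat →L[ℝ] symSubmodule n :=
  LinearMap.toContinuousLinearMap
  { toFun := fun X => ⟨(2⁻¹ : ℝ) • (X + Xᵀ), by
      rw [mem_symSubmodule, Matrix.transpose_smul, Matrix.transpose_add,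
        Matrix.transpose_transpose, add_comm]⟩
    map_add' := by
      intro X Y
      apply Subtype.ext
      simp only [Submodule.coe_add]
      rw [Matrix.transpose_add]
      module
    map_smul' := by
      intro c X
      apply Subtype.ext
      simp only [RingHom.id_apply, SetLike.val_smul]
      rw [Matrix.transpose_smul]
      module }

lemma symProj_apply (X : Mat) : (symProj X : Mat) = (2⁻¹ : ℝ) • (X + Xᵀ) := rfl

lemma symProj_apply_symm {X : Mat} (h : Xᵀ = X) : (symProj X : Mat) = X := by
  rw [symProj_apply, h, smul_add]
  module

lemma norm_matrix_mul_le (A B : Mat) : ‖A * B‖ ≤ (n : ℝ) * ‖A‖ * ‖B‖ := by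
  have hnn : (0:ℝ) ≤ (n : ℝ) * ‖A‖ * ‖B‖ := by positivity
  rw [Matrix.norm_le_iff hnn]
  intro i j
  rw [Matrix.mul_apply]
  calc ‖∑ k, A i k * B k j‖ ≤ ∑ k, ‖A i k * B k j‖ := norm_sum_le _ _
    _ ≤ ∑ _k : Fin n, ‖A‖ * ‖B‖ := by
        refine Finset.sum_le_sum fun k _ => ?_
        rw [norm_mul]
        exact mul_le_mul (Matrix.norm_entry_le_entrywise_sup_norm A)
          (Matrix.norm_entry_le_entrywise_sup_norm B) (norm_nonneg _) (norm_nonneg _)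
    _ = (n : ℝ) * ‖A‖ * ‖B‖ := by simp [Finset.sum_const, mul_assoc]

lemma mulBB : IsBoundedBilinearMap ℝ (fun p : Mat × Mat => p.1 * p.2) where
  add_left := fun a b c => Matrix.add_mul a b c
  smul_left := fun c a b => Matrix.smul_mul c a b
  add_right := fun a b c => Matrix.mul_add a b c
  smul_right := fun c a b => Matrix.mul_smul a c b
  bound := by
    refine ⟨(n : ℝ) + 1, by positivity, fun A B => ?_⟩
    calc ‖A * B‖ ≤ (n : ℝ) * ‖A‖ * ‖B‖ := norm_matrix_mul_le A B
      _ ≤ ((n : ℝ) + 1) * ‖A‖ * ‖B‖ := by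
          have : (n:ℝ) ≤ (n:ℝ) + 1 := by linarith
          gcongr


lemma exists_unit_decomp {x : Fin n → ℝ} (hx : x ≠ 0) :
    ∃ (u : Fin n → ℝ) (t : ℝ), u ⬝ᵥ u = 1 ∧ 0 < t ∧ x = t • u := by
  have hd0 : (0:ℝ) ≤ x ⬝ᵥ x := Finset.sum_nonneg fun i _ => mul_self_nonneg _
  have hdne : x ⬝ᵥ x ≠ 0 := fun h => hx (dotProduct_self_eq_zero.mp h)
  have hd : 0 < x ⬝ᵥ x := lt_of_le_of_ne hd0 (Ne.symm hdne)
  have hs : 0 < Real.sqrt (x ⬝ᵥ x) := Real.sqrt_pos.mpr hd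
  refine ⟨(Real.sqrt (x ⬝ᵥ x))⁻¹ • x, Real.sqrt (x ⬝ᵥ x), ?_, hs, ?_⟩
  · rw [smul_dotProduct, dotProduct_smul, smul_eq_mul, smul_eq_mul, ← mul_assoc,
      ← mul_inv, Real.mul_self_sqrt hd.le, inv_mul_cancel₀ hdne]
  · rw [smul_inv_smul₀ hs.ne']

lemma quad_bound (E : Mat) {u : Fin n → ℝ} (hu : u ⬝ᵥ u = 1) :
    |u ⬝ᵥ (E *ᵥ u)| ≤ (n : ℝ) * ‖E‖ := by
  have hrep : u ⬝ᵥ (E *ᵥ u) = ∑ i, ∑ j, u i * (E i j * u j) := by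
    simp [dotProduct, Matrix.mulVec, Finset.mul_sum]
  have h1 : |u ⬝ᵥ (E *ᵥ u)| ≤ ∑ i, ∑ j, |u i| * ‖E‖ * |u j| := by
    rw [hrep]
    calc |∑ i, ∑ j, u i * (E i j * u j)| ≤ ∑ i, |∑ j, u i * (E i j * u j)| :=
          Finset.abs_sum_le_sum_abs _ _
      _ ≤ ∑ i, ∑ j, |u i| * ‖E‖ * |u j| := by
          refine Finset.sum_le_sum fun i _ => ?_
          calc |∑ j, u i * (E i j * u j)| ≤ ∑ j, |u i * (E i j * u j)| :=
                Finset.abs_sum_le_sum_abs _ _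
            _ ≤ ∑ j, |u i| * ‖E‖ * |u j| := by
                refine Finset.sum_le_sum fun j _ => ?_
                rw [abs_mul, abs_mul]
                calc |u i| * (|E i j| * |u j|) ≤ |u i| * (‖E‖ * |u j|) :=
                      mul_le_mul_of_nonneg_left (mul_le_mul_of_nonneg_right
                        (Matrix.norm_entry_le_entrywise_sup_norm E) (abs_nonneg _))
                        (abs_nonneg _)
                  _ = |u i| * ‖E‖ * |u j| := by ring
  have h2 : ∑ i, ∑ j, |u i| * ‖E‖ * |u j| = ‖E‖ * (∑ i, |u i|) ^ 2 := by
    rw [sq, Finset.sum_mul_sum Finset.univ Finset.univ (fun i => |u i|) (fun j => |u j|),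
      Finset.mul_sum]
    refine Finset.sum_congr rfl fun i _ => ?_
    rw [Finset.mul_sum]
    refine Finset.sum_congr rfl fun j _ => ?_
    ring
  have h3 : (∑ i, |u i|) ^ 2 ≤ (n : ℝ) := by
    calc (∑ i, |u i|) ^ 2 ≤ (Finset.univ.card : ℝ) * ∑ i, |u i| ^ 2 :=
          sq_sum_le_card_mul_sum_sq
      _ = (n : ℝ) := by
          simp only [Finset.card_univ, Fintype.card_fin, sq_abs]
          rw [show ∑ i, u i ^ 2 = u ⬝ᵥ u by simp [dotProduct, sq], hu, mul_one]
  calc |u ⬝ᵥ (E *ᵥ u)| ≤ ‖E‖ * (∑ i, |u i|) ^ 2 := by rw [← h2]; exact h1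
    _ ≤ ‖E‖ * (n : ℝ) := mul_le_mul_of_nonneg_left h3 (norm_nonneg _)
    _ = (n : ℝ) * ‖E‖ := mul_comm _ _

lemma posDef_near {S₀ : Mat} (h₀ : S₀.PosDef) :
    ∃ ε > (0:ℝ), ∀ S : Mat, Sᵀ = S → ‖S - S₀‖ < ε → S.PosDef := by
  classical
  set K : Set (Fin n → ℝ) := {x | x ⬝ᵥ x = 1} with hK
  have hcont : Continuous (fun x : Fin n → ℝ => x ⬝ᵥ x) := by
    refine continuous_finset_sum _ fun i _ => ((continuous_apply i).mul (continuous_apply i))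
  have hKclosed : IsClosed K := isClosed_eq hcont continuous_const
  have hKbdd : Bornology.IsBounded K := by
    refine (Metric.isBounded_closedBall (x := (0 : Fin n → ℝ)) (r := 1)).subset ?_
    intro x hx
    rw [Metric.mem_closedBall, dist_zero_right]
    refine (pi_norm_le_iff_of_nonneg zero_le_one).mpr fun i => ?_
    rw [Real.norm_eq_abs, abs_le_one_iff_mul_self_le_one]
    calc x i * x i ≤ ∑ j, x j * x j :=
          Finset.single_le_sum (fun j _ => mul_self_nonneg (x j)) (Finset.mem_univ i)
      _ = 1 := hx
  have hKcomp : IsCompact K := Metric.isCompact_of_isClosed_isBounded hKclosed hKbdd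
  by_cases hne : K.Nonempty
  · have hQcont : Continuous (fun x : Fin n → ℝ => x ⬝ᵥ (S₀ *ᵥ x)) := by
      have hrw : (fun x : Fin n → ℝ => x ⬝ᵥ (S₀ *ᵥ x))
          = fun x => ∑ i, x i * ∑ j, S₀ i j * x j := by
        funext x; simp [dotProduct, Matrix.mulVec]
      rw [hrw]
      refine continuous_finset_sum _ fun i _ => (continuous_apply i).mul ?_
      exact continuous_finset_sum _ fun j _ => continuous_const.mul (continuous_apply j)
    obtain ⟨x₀, hx₀K, hx₀min⟩ := hKcomp.exists_isMinOn hne hQcont.continuousOn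
    have hx₀ne : x₀ ≠ 0 := by
      intro h
      rw [hK] at hx₀K
      simp only [Set.mem_setOf_eq, h, zero_dotProduct] at hx₀K
      norm_num at hx₀K
    set c : ℝ := x₀ ⬝ᵥ (S₀ *ᵥ x₀) with hc
    have hcpos : 0 < c := by simpa using h₀.dotProduct_mulVec_pos hx₀ne
    refine ⟨c / ((n : ℝ) + 1), by positivity, fun S hSsym hSnear => ?_⟩
    refine Matrix.PosDef.of_dotProduct_mulVec_pos (isHermitian_of_symm' hSsym) fun x hx => ?_
    obtain ⟨u, t, hu1, ht, hxtu⟩ := exists_unit_decomp hx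
    have huK : u ∈ K := hu1
    have key : 0 < u ⬝ᵥ (S *ᵥ u) := by
      have hsplit : u ⬝ᵥ (S *ᵥ u) = u ⬝ᵥ (S₀ *ᵥ u) + u ⬝ᵥ ((S - S₀) *ᵥ u) := by
        rw [Matrix.sub_mulVec, dotProduct_sub]
        ring
      have hb := quad_bound (S - S₀) hu1
      have hlow : -((n:ℝ) * ‖S - S₀‖) ≤ u ⬝ᵥ ((S - S₀) *ᵥ u) := neg_le_of_abs_le hb
      have hmin := hx₀min huK
      have hEbound : (n : ℝ) * ‖S - S₀‖ ≤ (n : ℝ) * (c / ((n:ℝ)+1)) := by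
        exact mul_le_mul_of_nonneg_left hSnear.le (Nat.cast_nonneg n)
      have hfinal : c - (n : ℝ) * (c / ((n:ℝ)+1)) = c / ((n:ℝ)+1) := by
        field_simp
        ring
      have : c / ((n:ℝ)+1) ≤ u ⬝ᵥ (S *ᵥ u) := by
        rw [hsplit, ← hfinal]
        have : c ≤ u ⬝ᵥ (S₀ *ᵥ u) := hmin
        linarith
      have hpos : 0 < c / ((n:ℝ)+1) := by positivity
      linarith
    have hform : x ⬝ᵥ (S *ᵥ x) = t^2 * (u ⬝ᵥ (S *ᵥ u)) := by
      rw [hxtu, Matrix.mulVec_smul, smul_dotProduct, dotProduct_smul,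
        smul_eq_mul, smul_eq_mul, ← mul_assoc, ← sq]
    simp only [star_trivial]
    rw [hform]
    positivity
  · refine ⟨1, one_pos, fun S hSsym _ => ?_⟩
    refine Matrix.PosDef.of_dotProduct_mulVec_pos (isHermitian_of_symm' hSsym) fun x hx => ?_
    exfalso
    obtain ⟨u, t, hu1, _, _⟩ := exists_unit_decomp hx
    exact hne ⟨u, hu1⟩


lemma symm_of_isHermitian' {X : Mat} (h : X.IsHermitian) : Xᵀ = X := by
  rw [Matrix.IsHermitian, Matrix.conjTranspose_eq_transpose_of_trivial] at h
  exact h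

lemma posDef_of_posSemidef_det_ne_zero {S : Mat} (h : S.PosSemidef) (hd : S.det ≠ 0) :
    S.PosDef := by
  refine Matrix.PosDef.of_dotProduct_mulVec_pos h.1 fun x hx => ?_
  set W := h.sqrt with hW
  have hWsymm : Wᵀ = W := symm_of_isHermitian' h.posSemidef_sqrt.isHermitian
  have hform : x ⬝ᵥ (S *ᵥ x) = (W *ᵥ x) ⬝ᵥ (W *ᵥ x) := by
    conv_lhs => rw [← h.sqrt_mul_self, ← hW, ← Matrix.mulVec_mulVec, dotProduct_mulVec]
    congr 1
    conv_lhs => rw [← hWsymm]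
    rw [Matrix.vecMul_transpose]
  have hWx : W *ᵥ x ≠ 0 := by
    intro h0
    have hSx : S *ᵥ x = 0 := by
      rw [← h.sqrt_mul_self, ← hW, ← Matrix.mulVec_mulVec, h0, Matrix.mulVec_zero]
    apply hx
    have hu : IsUnit S.det := isUnit_iff_ne_zero.mpr hd
    calc x = (1 : Mat) *ᵥ x := by rw [Matrix.one_mulVec]
      _ = (S⁻¹ * S) *ᵥ x := by rw [Matrix.nonsing_inv_mul S hu]
      _ = S⁻¹ *ᵥ (S *ᵥ x) := by rw [← Matrix.mulVec_mulVec]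
      _ = 0 := by rw [hSx, Matrix.mulVec_zero]
  have hpos : 0 < (W *ᵥ x) ⬝ᵥ (W *ᵥ x) := by
    have h0 : (0:ℝ) ≤ (W *ᵥ x) ⬝ᵥ (W *ᵥ x) := Finset.sum_nonneg fun i _ => mul_self_nonneg _
    refine lt_of_le_of_ne h0 (Ne.symm fun hc => hWx (dotProduct_self_eq_zero.mp hc))
  simp only [star_trivial]
  rw [hform]
  exact hpos

lemma trace_transpose_mul_self_eq_zero_iff (N : Mat) : (Nᵀ * N).trace = 0 ↔ N = 0 := by
  have hrep : (Nᵀ * N).trace = ∑ j, ∑ i, N i j * N i j := by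
    simp [Matrix.trace, Matrix.diag, Matrix.mul_apply]
  constructor
  · intro h
    rw [hrep] at h
    have h1 := (Finset.sum_eq_zero_iff_of_nonneg (fun j _ =>
      Finset.sum_nonneg fun i _ => mul_self_nonneg (N i j))).mp h
    ext i j
    have h2 := (Finset.sum_eq_zero_iff_of_nonneg (fun i _ =>
      mul_self_nonneg (N i j))).mp (h1 j (Finset.mem_univ j)) i (Finset.mem_univ i)
    simpa using mul_self_eq_zero.mp h2
  · intro h; rw [h]; simp

lemma lyapunov_inj_symm {S₀ K : Mat} (hS₀ : S₀.PosDef) (hKsym : Kᵀ = K)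
    (h : S₀ * K + K * S₀ = 0) : K = 0 := by
  have hpsd := hS₀.posSemidef
  set W := hpsd.sqrt with hW
  have hWsymm : Wᵀ = W := symm_of_isHermitian' hpsd.posSemidef_sqrt.isHermitian
  have hWW : W * W = S₀ := hpsd.sqrt_mul_self
  have htr0 : (K * (S₀ * K) + K * (K * S₀)).trace = 0 := by
    have h0 : K * (S₀ * K) + K * (K * S₀) = K * (S₀ * K + K * S₀) := by
      rw [Matrix.mul_add]
    rw [h0, h, Matrix.mul_zero, Matrix.trace_zero]
  have hWK : (W * K)ᵀ * (W * K) = K * (S₀ * K) := by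
    rw [Matrix.transpose_mul, hWsymm, hKsym, Matrix.mul_assoc, ← Matrix.mul_assoc W W K, hWW]
  have e2 : (K * (K * S₀)).trace = (K * (S₀ * K)).trace := by
    rw [Matrix.trace_mul_comm K (K * S₀), Matrix.mul_assoc]
  have htr : ((W * K)ᵀ * (W * K)).trace = 0 := by
    rw [hWK]
    have := htr0
    rw [Matrix.trace_add, e2] at this
    linarith
  have hWK0 : W * K = 0 := (trace_transpose_mul_self_eq_zero_iff _).mp htr
  have hdetW : W.det ≠ 0 := by
    intro hc
    have := hS₀.det_pos
    rw [← hWW, Matrix.det_mul, hc, mul_zero] at this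
    exact lt_irrefl _ this
  calc K = (1 : Mat) * K := by rw [Matrix.one_mul]
    _ = (W⁻¹ * W) * K := by rw [Matrix.nonsing_inv_mul W (isUnit_iff_ne_zero.mpr hdetW)]
    _ = W⁻¹ * (W * K) := by rw [Matrix.mul_assoc]
    _ = 0 := by rw [hWK0, Matrix.mul_zero]

end Aux3

section Aux4

variable {n : ℕ}

local notation "Mat" => Matrix (Fin n) (Fin n) ℝ

lemma differentiableAt_of_isUnit {A : Mat} (hA : IsUnit A.det) :
    DifferentiableAt ℝ (fun X : Mat => (psdSqrt (Xᵀ * X)).trace) A := by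
  have hdetA : A.det ≠ 0 := by
    intro h; rw [h] at hA; exact (by simpa using hA : IsUnit (0:ℝ)).ne_zero rfl
  have hM₀psd : (Aᵀ * A).PosSemidef := by
    have := Matrix.posSemidef_conjTranspose_mul_self A
    rwa [Matrix.conjTranspose_eq_transpose_of_trivial] at this
  have hM₀det : (Aᵀ * A).det ≠ 0 := by
    rw [Matrix.det_mul, Matrix.det_transpose]
    exact mul_ne_zero hdetA hdetA
  set S₀ : Mat := hM₀psd.sqrt with hS₀def
  have hS₀symm : S₀ᵀ = S₀ := symm_of_isHermitian' hM₀psd.posSemidef_sqrt.isHermitian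
  have hS₀sq : S₀ * S₀ = Aᵀ * A := hM₀psd.sqrt_mul_self
  have hS₀det : S₀.det ≠ 0 := by
    intro h
    apply hM₀det
    rw [← hS₀sq, Matrix.det_mul, h, zero_mul]
  have hS₀pd : S₀.PosDef :=
    posDef_of_posSemidef_det_ne_zero hM₀psd.posSemidef_sqrt hS₀det
  -- strict derivative of squaring on all matrices
  set idM := ContinuousLinearMap.id ℝ (Matrix (Fin n) (Fin n) ℝ) with hidM
  set D : Mat →L[ℝ] Mat := (mulBB.deriv (S₀, S₀)).comp (idM.prod idM) with hD
  have hsq : HasStrictFDerivAt (fun X : Mat => X * X) D S₀ := by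
    have h1 := mulBB.hasStrictFDerivAt (S₀, S₀)
    have h2 : HasStrictFDerivAt (fun X : Mat => (X, X)) (idM.prod idM) S₀ :=
      (idM.prod idM).hasStrictFDerivAt
    exact HasStrictFDerivAt.comp (g := fun p : Mat × Mat => p.1 * p.2)
      (f := fun X : Mat => (X, X)) S₀ h1 h2
  have hDapp : ∀ K : Mat, D K = S₀ * K + K * S₀ := by
    intro K
    show (mulBB.deriv (S₀, S₀)) (K, K) = _
    rw [IsBoundedBilinearMap.deriv_apply]
  -- f on the symmetric subspace
  set ιS : (symSubmodule n) →L[ℝ] Mat := (symSubmodule n).subtypeL with hιS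
  set fS : symSubmodule n → symSubmodule n := fun S => symProj ((S : Mat) * (S : Mat)) with hfS
  set S₀' : symSubmodule n := ⟨S₀, hS₀symm⟩ with hS₀'
  set L : (symSubmodule n) →L[ℝ] (symSubmodule n) := symProj.comp (D.comp ιS) with hLdef
  have hfSderiv : HasStrictFDerivAt fS L S₀' := by
    have hι : HasStrictFDerivAt (fun S : symSubmodule n => (S : Mat)) ιS S₀' :=
      ιS.hasStrictFDerivAt
    have hmid : HasStrictFDerivAt
        (fun S : symSubmodule n => ((S : Mat) * (S : Mat))) (D.comp ιS) S₀' :=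
      hsq.comp S₀' hι
    exact (symProj.hasStrictFDerivAt).comp S₀' hmid
  have hLapp : ∀ H : symSubmodule n, (L H : Mat) = S₀ * (H : Mat) + (H : Mat) * S₀ := by
    intro H
    have h1 : (L H : Mat) = (symProj (D (ιS H)) : Mat) := rfl
    rw [h1]
    have h2 : D (ιS H) = S₀ * (H : Mat) + (H : Mat) * S₀ := hDapp _
    rw [h2]
    refine symProj_apply_symm ?_
    rw [Matrix.transpose_add, Matrix.transpose_mul, Matrix.transpose_mul, hS₀symm, H.2, add_comm]
  have hLinj : Function.Injective L := by
    intro H₁ H₂ hH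
    have h0 : L (H₁ - H₂) = 0 := by rw [map_sub, sub_eq_zero]; exact hH
    have hcoe : S₀ * ((H₁ - H₂ : symSubmodule n) : Mat)
        + ((H₁ - H₂ : symSubmodule n) : Mat) * S₀ = 0 := by
      have := congrArg (Subtype.val) h0
      rw [hLapp] at this
      simpa using this
    have hK0 : ((H₁ - H₂ : symSubmodule n) : Mat) = 0 :=
      lyapunov_inj_symm hS₀pd (H₁ - H₂).2 hcoe
    have : H₁ - H₂ = 0 := Subtype.ext hK0
    exact sub_eq_zero.mp this
  have hLbij : Function.Bijective
      ((L : (symSubmodule n) →ₗ[ℝ] (symSubmodule n)) : (symSubmodule n) → (symSubmodule n)) := by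
    refine ⟨hLinj, ?_⟩
    exact LinearMap.injective_iff_surjective.mp hLinj
  set e : (symSubmodule n) ≃L[ℝ] (symSubmodule n) :=
    (LinearEquiv.ofBijective (L : (symSubmodule n) →ₗ[ℝ] (symSubmodule n)) hLbij).toContinuousLinearEquiv
    with he
  have hecoe : (e : (symSubmodule n) →L[ℝ] (symSubmodule n)) = L := by
    ext x; rfl
  have hfS' : HasStrictFDerivAt fS (e : (symSubmodule n) →L[ℝ] (symSubmodule n)) S₀' := by
    rwa [hecoe]
  set φ : symSubmodule n → symSubmodule n := hfS'.localInverse fS e S₀' with hφ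
  -- the map q X = symProj (Xᵀ X)
  set tCLM : Mat →L[ℝ] Mat := LinearMap.toContinuousLinearMap
    ((Matrix.transposeLinearEquiv (Fin n) (Fin n) ℝ ℝ : _ ≃ₗ[ℝ] _) :
      Matrix (Fin n) (Fin n) ℝ →ₗ[ℝ] Matrix (Fin n) (Fin n) ℝ) with htCLM
  have htCLMapp : ∀ X : Mat, tCLM X = Xᵀ := fun _ => rfl
  set q : Mat → symSubmodule n := fun X => symProj (Xᵀ * X) with hq
  have hqdiff : DifferentiableAt ℝ q A := by
    have hinner : HasStrictFDerivAt (fun X : Mat => (Xᵀ, X))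
        (tCLM.prod idM) A := by
      have := (tCLM.prod idM).hasStrictFDerivAt (x := A)
      convert this using 2
      rfl
    have hm2 : HasStrictFDerivAt (fun X : Mat => Xᵀ * X)
        ((mulBB.deriv (Aᵀ, A)).comp (tCLM.prod idM)) A := by
      have h1 := mulBB.hasStrictFDerivAt (Aᵀ, A)
      exact HasStrictFDerivAt.comp (g := fun p : Mat × Mat => p.1 * p.2)
        (f := fun X : Mat => (Xᵀ, X)) A h1 hinner
    exact (symProj.differentiableAt).comp A hm2.differentiableAt
  have hqA : q A = fS S₀' := by
    apply Subtype.ext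
    show (symProj (Aᵀ * A) : Mat) = (symProj ((S₀' : Mat) * (S₀' : Mat)) : Mat)
    rw [show ((S₀' : Mat) * (S₀' : Mat)) = Aᵀ * A from hS₀sq]
  set Ψ : Mat → Mat := fun X => (φ (q X) : Mat) with hΨ
  have hφdiff : DifferentiableAt ℝ φ (q A) := by
    rw [hqA]; exact hfS'.to_localInverse.differentiableAt
  have hΨdiff : DifferentiableAt ℝ Ψ A :=
    (ιS.differentiableAt).comp A (hφdiff.comp A hqdiff)
  have hΨA : Ψ A = S₀ := by
    show (φ (q A) : Mat) = S₀
    rw [hqA]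
    rw [show φ (fS S₀') = S₀' from hfS'.localInverse_apply_image]
  obtain ⟨ε, hε, hball⟩ := posDef_near hS₀pd
  have hev1 : ∀ᶠ X in 𝓝 A, fS (φ (q X)) = q X := by
    have h := hfS'.eventually_right_inverse
    have hqc : ContinuousAt q A := hqdiff.continuousAt
    have h' : ∀ᶠ y in 𝓝 (q A), fS (φ y) = y := by rwa [hqA]
    exact hqc.eventually h'
  have hev2 : ∀ᶠ X in 𝓝 A, ‖Ψ X - S₀‖ < ε := by
    have hΨc : ContinuousAt Ψ A := hΨdiff.continuousAt
    have hb : ∀ᶠ Y in 𝓝 (Ψ A), ‖Y - S₀‖ < ε := by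
      rw [hΨA]
      have hmem := Metric.ball_mem_nhds S₀ hε
      refine Filter.eventually_of_mem hmem fun y hy => ?_
      rwa [Metric.mem_ball, dist_eq_norm] at hy
    exact hΨc.eventually hb
  have hkey : (fun X : Mat => (psdSqrt (Xᵀ * X)).trace) =ᶠ[𝓝 A]
      fun X => (Ψ X).trace := by
    filter_upwards [hev1, hev2] with X h1 h2
    have hXpsd : (Xᵀ * X).PosSemidef := by
      have := Matrix.posSemidef_conjTranspose_mul_self X
      rwa [Matrix.conjTranspose_eq_transpose_of_trivial] at this
    have hΨsym : (Ψ X)ᵀ = Ψ X := (φ (q X)).2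
    have hΨsq : Ψ X * Ψ X = Xᵀ * X := by
      have hcoe := congrArg Subtype.val h1
      have hsymmul : (Ψ X * Ψ X)ᵀ = Ψ X * Ψ X := by
        rw [Matrix.transpose_mul, hΨsym]
      have hLft : (fS (φ (q X)) : Mat) = Ψ X * Ψ X := symProj_apply_symm hsymmul
      have hRgt : (q X : Mat) = Xᵀ * X := symProj_apply_symm
        (by rw [Matrix.transpose_mul, Matrix.transpose_transpose])
      rw [hLft, hRgt] at hcoe
      exact hcoe
    have hΨpd : (Ψ X).PosDef := hball _ hΨsym h2
    have hfin : psdSqrt (Xᵀ * X) = Ψ X := by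
      rw [psdSqrt, dif_pos hXpsd]
      exact (hΨpd.posSemidef.eq_sqrt_of_sq_eq hXpsd (by rw [pow_two, hΨsq])).symm
    rw [hfin]
  have htrdiff : DifferentiableAt ℝ (fun X : Mat => (Ψ X).trace) A := by
    have htr : DifferentiableAt ℝ (fun Y : Mat => Y.trace) (Ψ A) :=
      (LinearMap.toContinuousLinearMap
        (Matrix.traceLinearMap (Fin n) ℝ ℝ)).differentiableAt
    exact htr.comp A hΨdiff
  exact htrdiff.congr_of_eventuallyEq hkey

end Aux4


/-- The function g : M(n,ℝ) → ℝ, g(A) = tr(√(AᵀA)), is (Fréchet) differentiable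
at A if and only if A is invertible. -/
theorem trace_sqrt_differentiable_iff_invertible {n : ℕ} (A : Matrix (Fin n) (Fin n) ℝ) :
    DifferentiableAt ℝ
      (fun X : Matrix (Fin n) (Fin n) ℝ => Matrix.trace (psdSqrt (Xᵀ * X))) A ↔
    IsUnit A.det := by
  constructor
  · intro h
    by_contra hns
    have hdet : A.det = 0 := by
      by_contra hd
      exact hns (isUnit_iff_ne_zero.mpr hd)
    exact not_differentiable_of_det_eq_zero hdet h
  · intro h
    exact differentiableAt_of_isUnit h
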